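/- Let (X, →, ≤) be a finitely branching ordered transition system where ≤ is a partial order with no infinite antichain, satisfying upward and downward monotonicity as well as upward and downward strict monotonicity. Then for every x_0 ∈ X, the reachability set Post*({x_0}) is infinite if, and only if, there exist states y, z ∈ X with x_0 →* y, y →+ z, and (y < z or z < y). -/

import Mathlib

/-- Build an infinite sequence by dependent choice preserving invariant `P`
and step relation `R`. -/
lemma exists_seq_aux {α : Type*} (P : α → Prop) (R : ℕ → α → α → Prop) (a0 : α) (h0 : P a0)
    (hstep : ∀ n a, P a → ∃ b, P b ∧ R n a b) :
    ∃ f : ℕ → α, f 0 = a0 ∧ (∀ n, P (f n)) ∧ ∀ n, R n (f n) (f (n+1)) := by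
  choose g hg1 hg2 using hstep
  refine ⟨fun n => (Nat.rec (motive := fun _ => {a // P a}) ⟨a0, h0⟩
    (fun n p => ⟨g n p.1 p.2, hg1 n p.1 p.2⟩) n).1, rfl, fun n => ?_, fun n => ?_⟩
  · exact (Nat.rec (motive := fun _ => {a // P a}) ⟨a0, h0⟩
      (fun n p => ⟨g n p.1 p.2, hg1 n p.1 p.2⟩) n).2
  · exact hg2 n _ _

/-- Pumping lemma: a strictly comparable pair connected by `TransGen`
yields an infinite reachability set. -/
lemma pump_aux {X : Type*} (step le' : X → X → Prop)
    (htrans : ∀ x y z, le' x y → le' y z → le' x z)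
    (hantisymm : ∀ x y, le' x y → le' y x → x = y)
    (lem : ∀ a b, Relation.TransGen step a b → ∀ c, le' a c → a ≠ c →
      ∃ d, le' b d ∧ b ≠ d ∧ Relation.ReflTransGen step c d)
    (x₀ y z : X) (hxy : Relation.ReflTransGen step x₀ y)
    (hyz : Relation.TransGen step y z) (hlyz : le' y z) (hne : y ≠ z) :
    {w | Relation.ReflTransGen step x₀ w}.Infinite := by
  have hstep' : ∀ (n : ℕ) (p : X × X), (Relation.TransGen step p.1 p.2 ∧ le' p.1 p.2 ∧ p.1 ≠ p.2 ∧
      Relation.ReflTransGen step x₀ p.1) → ∃ q : X × X, (Relation.TransGen step q.1 q.2 ∧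
      le' q.1 q.2 ∧ q.1 ≠ q.2 ∧ Relation.ReflTransGen step x₀ q.1) ∧ q.1 = p.2 := by
    rintro n ⟨u, v⟩ ⟨hTG, hle, hneuv, hreach⟩
    obtain ⟨d, hd1, hd2, hd3⟩ := lem u v hTG v hle hneuv
    refine ⟨(v, d), ⟨?_, hd1, hd2, hreach.trans hTG.to_reflTransGen⟩, rfl⟩
    rcases (Relation.reflTransGen_iff_eq_or_transGen.mp hd3) with h1 | h1
    · exact absurd h1.symm hd2
    · exact h1
  obtain ⟨f, hf0, hfP, hfR⟩ := exists_seq_aux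
    (fun p : X × X => Relation.TransGen step p.1 p.2 ∧ le' p.1 p.2 ∧ p.1 ≠ p.2 ∧
      Relation.ReflTransGen step x₀ p.1)
    (fun _ p q => q.1 = p.2) (y, z) ⟨hyz, hlyz, hne, hxy⟩ hstep'
  · set a : ℕ → X := fun n => (f n).1 with ha
    have hstepa : ∀ n, le' (a n) (a (n+1)) ∧ a n ≠ a (n+1) := by
      intro n
      have h1 := (hfP n)
      have h2 := hfR n
      constructor
      · show le' (f n).1 (f (n+1)).1
        rw [h2]; exact h1.2.1
      · show (f n).1 ≠ (f (n+1)).1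
        rw [h2]; exact h1.2.2.1
    have hmono : ∀ i j, i < j → le' (a i) (a j) ∧ a i ≠ a j := by
      intro i j hij
      induction j, hij using Nat.le_induction with
      | base => exact hstepa i
      | succ j hij ih =>
        refine ⟨htrans _ _ _ ih.1 (hstepa j).1, fun heq => ?_⟩
        have : le' (a j) (a i) := heq ▸ (hstepa j).1
        exact ih.2 (hantisymm _ _ ih.1 this)
    have hinj : Function.Injective a := by
      intro i j hij
      by_contra hne'
      rcases Nat.lt_or_ge i j with h | h
      · exact (hmono i j h).2 hij
      · exact (hmono j i (lt_of_le_of_ne h (Ne.symm hne'))).2 hij.symm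
    exact Set.infinite_of_injective_forall_mem hinj (fun n => (hfP n).2.2.2)

/-- Lemma A: if the reachability set of `x` is infinite and `V` is a finite set,
then `x` reaches some `y ∉ V` whose reachability set is again infinite. -/
lemma escape_aux {X : Type*} (step : X → X → Prop) (hfin : ∀ x : X, {y | step x y}.Finite)
    (x : X) (hx : {z | Relation.ReflTransGen step x z}.Infinite)
    (V : Set X) (hV : V.Finite) :
    ∃ y, y ∉ V ∧ Relation.ReflTransGen step x y ∧
      {z | Relation.ReflTransGen step y z}.Infinite := by
  by_contra hcon
  push_neg at hcon
  have hcon' : ∀ y, y ∉ V → Relation.ReflTransGen step x y →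
      {z | Relation.ReflTransGen step y z}.Finite := by
    intro y h1 h2
    exact hcon y h1 h2
  have hxV : x ∈ V := by
    by_contra hxV
    exact hx (hcon x hxV Relation.ReflTransGen.refl)
  set T : Set X := V ∪ ⋃ y ∈ V, ⋃ w ∈ {w | step y w ∧ w ∉ V ∧ Relation.ReflTransGen step x w},
      {z | Relation.ReflTransGen step w z} with hT
  have hTfin : T.Finite := by
    refine hV.union ?_
    refine Set.Finite.biUnion hV (fun y _ => ?_)
    refine Set.Finite.biUnion ((hfin y).subset (fun w hw => hw.1)) (fun w hw => ?_)
    exact hcon' w hw.2.1 hw.2.2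
  have hsub : ∀ z, Relation.ReflTransGen step x z → z ∈ T := by
    intro z hz
    induction hz with
    | refl => exact Or.inl hxV
    | @tail b c hb hstep ih =>
      by_cases hcV : c ∈ V
      · exact Or.inl hcV
      · rcases ih with hbV | hbU
        · refine Or.inr ?_
          simp only [Set.mem_iUnion, Set.mem_setOf_eq]
          exact ⟨b, hbV, c, ⟨hstep, hcV, hb.tail hstep⟩, Relation.ReflTransGen.refl⟩
        · simp only [Set.mem_iUnion, Set.mem_setOf_eq] at hbU
          obtain ⟨y, hyV, w, hw, hwb⟩ := hbU
          refine Or.inr ?_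
          simp only [Set.mem_iUnion, Set.mem_setOf_eq]
          exact ⟨y, hyV, w, hw, hwb.tail hstep⟩
  exact hx (hTfin.subset (fun z hz => hsub z hz))

/-- For a finitely branching ordered transition system whose
partial order has no infinite antichain, with upward and downward (plain and
strict) monotonicity, the reachability set of `x₀` is infinite iff some state
`y` reachable from `x₀` can reach (in at least one step) a state `z` strictly
comparable with `y`. -/
theorem stmt_10 {X : Type*} (step le : X → X → Prop)
    (hrefl : ∀ x, le x x)
    (htrans : ∀ x y z, le x y → le y z → le x z)
    (hantisymm : ∀ x y, le x y → le y x → x = y)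
    (hfin : ∀ x : X, {y | step x y}.Finite)
    (hac : ∀ A : Set X, (∀ a ∈ A, ∀ b ∈ A, a ≠ b → ¬ le a b ∧ ¬ le b a) → A.Finite)
    (hup : ∀ x y x', step x y → le x x' →
      ∃ y', le y y' ∧ Relation.ReflTransGen step x' y')
    (hdown : ∀ x y x', step x y → le x' x →
      ∃ y', le y' y ∧ Relation.ReflTransGen step x' y')
    (hupstrict : ∀ x y x', step x y → le x x' → x ≠ x' →
      ∃ y', le y y' ∧ y ≠ y' ∧ Relation.ReflTransGen step x' y')
    (hdownstrict : ∀ x y x', step x y → le x' x → x' ≠ x →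
      ∃ y', le y' y ∧ y' ≠ y ∧ Relation.ReflTransGen step x' y')
    (x₀ : X) :
    {z | Relation.ReflTransGen step x₀ z}.Infinite ↔
    (∃ y z : X, Relation.ReflTransGen step x₀ y ∧ Relation.TransGen step y z ∧
      ((le y z ∧ y ≠ z) ∨ (le z y ∧ z ≠ y))) := by
  classical
  constructor
  · -- forward direction
    intro hinf
    -- balls of radius n
    let B : ℕ → Set X := fun n =>
      Nat.rec ({x₀} : Set X) (fun _ Bn => Bn ∪ ⋃ x ∈ Bn, {y | step x y}) n
    have hBsucc : ∀ n, B (n+1) = B n ∪ ⋃ x ∈ B n, {y | step x y} := fun n => rfl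
    have hBfin : ∀ n, (B n).Finite := by
      intro n
      induction n with
      | zero => exact Set.finite_singleton x₀
      | succ n ih =>
        rw [hBsucc]
        exact ih.union (Set.Finite.biUnion ih (fun x _ => hfin x))
    have hBmono : ∀ m n, m ≤ n → B m ⊆ B n := by
      intro m n h
      induction h with
      | refl => exact subset_rfl
      | step _ ih => rename_i k _
                     rw [hBsucc]
                     exact ih.trans Set.subset_union_left
    have hreachB : ∀ z, Relation.ReflTransGen step x₀ z → ∃ K, z ∈ B K := by
      intro z hz
      induction hz with
      | refl => exact ⟨0, rfl⟩
      | @tail b c hb hstep ih =>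
        obtain ⟨K, hK⟩ := ih
        refine ⟨K+1, ?_⟩
        rw [hBsucc]
        refine Or.inr ?_
        simp only [Set.mem_iUnion, Set.mem_setOf_eq]
        exact ⟨b, hK, hstep⟩
    -- build the sequence
    obtain ⟨f, hf0, hfP, hfR⟩ := exists_seq_aux
      (fun x : X => Relation.ReflTransGen step x₀ x ∧
        {z | Relation.ReflTransGen step x z}.Infinite)
      (fun n a b => b ∉ B n ∧ b ≠ a ∧ Relation.ReflTransGen step a b)
      x₀ ⟨Relation.ReflTransGen.refl, hinf⟩
      (by
        intro n a ha
        obtain ⟨y, hy1, hy2, hy3⟩ := escape_aux step hfin a ha.2 (B n ∪ {a})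
          ((hBfin n).union (Set.finite_singleton a))
        simp only [Set.mem_union, Set.mem_singleton_iff, not_or] at hy1
        exact ⟨y, ⟨ha.1.trans hy2, hy3⟩, hy1.1, hy1.2, hy2⟩)
    -- TransGen between elements
    have hTG1 : ∀ n, Relation.TransGen step (f n) (f (n+1)) := by
      intro n
      obtain ⟨_, hne, hrt⟩ := hfR n
      rcases Relation.reflTransGen_iff_eq_or_transGen.mp hrt with h | h
      · exact absurd h hne
      · exact h
    have hTG : ∀ i j, i < j → Relation.TransGen step (f i) (f j) := by
      intro i j hij
      induction j, hij using Nat.le_induction with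
      | base => exact hTG1 i
      | succ j _ ih => exact ih.trans (hTG1 j)
    -- range of f is infinite
    have hrange : (Set.range f).Infinite := by
      intro hfint
      have hcover : (Set.univ : Set ℕ) ⊆ ⋃ v ∈ Set.range f, {n | f n = v} := by
        intro n _
        simp only [Set.mem_iUnion, Set.mem_setOf_eq]
        exact ⟨f n, Set.mem_range_self n, rfl⟩
      have hfib : ∀ v ∈ Set.range f, {n | f n = v}.Finite := by
        rintro v ⟨m, rfl⟩
        obtain ⟨K, hK⟩ := hreachB (f m) (hfP m).1
        refine (Set.finite_Iic K).subset ?_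
        intro n hn
        simp only [Set.mem_setOf_eq] at hn
        by_contra hnK
        simp only [Set.mem_Iic, not_le] at hnK
        -- n ≥ K + 1, so n = (n-1)+1 with n-1 ≥ K
        obtain ⟨p, rfl⟩ : ∃ p, n = p + 1 := ⟨n - 1, by omega⟩
        have hp : K ≤ p := by omega
        have := (hfR p).1
        exact this (hn ▸ hBmono K p hp hK)
      exact Set.infinite_univ ((hfint.biUnion hfib).subset hcover)
    -- extract comparable pair
    have hnac : ¬ (∀ a ∈ Set.range f, ∀ b ∈ Set.range f, a ≠ b → ¬ le a b ∧ ¬ le b a) :=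
      fun h => hrange (hac _ h)
    push_neg at hnac
    obtain ⟨a, ha, b, hb, hab, hcomp⟩ := hnac
    obtain ⟨i, rfl⟩ := ha
    obtain ⟨j, rfl⟩ := hb
    have hij : i ≠ j := fun h => hab (congrArg f h)
    have hcomp' : le (f i) (f j) ∨ le (f j) (f i) := by
      by_cases h1 : le (f i) (f j)
      · exact Or.inl h1
      · by_cases h2 : le (f j) (f i)
        · exact Or.inr h2
        · exact absurd hcomp (by simp [h1, h2])
    rcases Nat.lt_or_ge i j with hlt | hge
    · refine ⟨f i, f j, (hfP i).1, hTG i j hlt, ?_⟩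
      rcases hcomp' with h | h
      · exact Or.inl ⟨h, hab⟩
      · exact Or.inr ⟨h, hab.symm⟩
    · have hlt : j < i := lt_of_le_of_ne hge (fun h => hij h.symm)
      refine ⟨f j, f i, (hfP j).1, hTG j i hlt, ?_⟩
      rcases hcomp' with h | h
      · exact Or.inr ⟨h, hab⟩
      · exact Or.inl ⟨h, hab.symm⟩
  · -- backward direction
    rintro ⟨y, z, hxy, hyz, hcase⟩
    have lemUp : ∀ a b, Relation.TransGen step a b → ∀ c, le a c → a ≠ c →
        ∃ d, le b d ∧ b ≠ d ∧ Relation.ReflTransGen step c d := by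
      intro a b hab
      induction hab with
      | single h =>
        intro c hc hne
        exact hupstrict _ _ _ h hc hne
      | @tail b' b _ h ih =>
        intro c hc hne
        obtain ⟨d, hd1, hd2, hd3⟩ := ih c hc hne
        obtain ⟨e, he1, he2, he3⟩ := hupstrict _ _ _ h hd1 hd2
        exact ⟨e, he1, he2, hd3.trans he3⟩
    have lemDown : ∀ a b, Relation.TransGen step a b → ∀ c, le c a → c ≠ a →
        ∃ d, le d b ∧ d ≠ b ∧ Relation.ReflTransGen step c d := by
      intro a b hab
      induction hab with
      | single h =>
        intro c hc hne
        exact hdownstrict _ _ _ h hc hne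
      | @tail b' b _ h ih =>
        intro c hc hne
        obtain ⟨d, hd1, hd2, hd3⟩ := ih c hc hne
        obtain ⟨e, he1, he2, he3⟩ := hdownstrict _ _ _ h hd1 hd2
        exact ⟨e, he1, he2, hd3.trans he3⟩
    rcases hcase with ⟨hle, hne⟩ | ⟨hle, hne⟩
    · exact pump_aux step le htrans hantisymm lemUp x₀ y z hxy hyz hle hne
    · refine pump_aux step (fun a b => le b a) (fun a b c h1 h2 => htrans c b a h2 h1)
        (fun a b h1 h2 => hantisymm a b h2 h1) ?_ x₀ y z hxy hyz hle hne.symm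
      intro a b hab c hc hnac
      obtain ⟨d, hd1, hd2, hd3⟩ := lemDown a b hab c hc (fun h => hnac h.symm)
      exact ⟨d, hd1, fun h => hd2 h.symm, hd3⟩
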